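/- Let λ ∈ K. Then: (i) for every root of unity ε ∈ K with 1 − λ·ε·q⁻¹ ≠ 0 one has v_q(1 − λ·ε·q⁻¹) ≥ min{0, v_q(λ) − 1} (where for λ = 0 the quantity v_q(λ) − 1 is interpreted as +∞, so the bound reads v_q(1 − 0) ≥ 0); and (ii) for all but finitely many roots of unity ε ∈ K of order coprime to p one has 1 − λ·ε·q⁻¹ ≠ 0 and v_q(1 − λ·ε·q⁻¹) = min{0, v_q(λ) − 1}. -/

import Mathlib

/-- The additive valuation on the algebraic closure of `ℚ_[p]` attached to an absolute
value `v`, normalised so that `q = p ^ d` has valuation `1`. -/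
noncomputable def vq (p d : ℕ) [Fact p.Prime] (v : AlgebraicClosure ℚ_[p] → ℝ)
    (x : AlgebraicClosure ℚ_[p]) : ℝ :=
  -Real.log (v x) / Real.log ((p : ℝ) ^ d)

/-- `ε` is a root of unity. -/
def IsRootOfUnity {K : Type*} [Monoid K] (ε : K) : Prop :=
  ∃ m : ℕ, 0 < m ∧ ε ^ m = 1

/-- `ε` is a root of unity of order coprime to `p`. -/
def IsPrimeToRootOfUnity (p : ℕ) {K : Type*} [Monoid K] (ε : K) : Prop :=
  ∃ m : ℕ, 0 < m ∧ ¬ p ∣ m ∧ ε ^ m = 1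

variable {p : ℕ} [Fact p.Prime] {v : AlgebraicClosure ℚ_[p] → ℝ}

local notation "K" => AlgebraicClosure ℚ_[p]

lemma myv_zero (hext : ∀ x : ℚ_[p], v (algebraMap ℚ_[p] K x) = ‖x‖) : v 0 = 0 := by
  simpa using hext 0

lemma myv_one (hext : ∀ x : ℚ_[p], v (algebraMap ℚ_[p] K x) = ‖x‖) : v 1 = 1 := by
  simpa using hext 1

lemma myv_neg (hmul : ∀ x y, v (x * y) = v x * v y)
    (hext : ∀ x : ℚ_[p], v (algebraMap ℚ_[p] K x) = ‖x‖) (x : K) : v (-x) = v x := by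
  have h1 : v (-1 : K) = 1 := by
    have := hext (-1)
    simpa using this
  calc v (-x) = v ((-1) * x) := by ring_nf
    _ = v (-1) * v x := hmul _ _
    _ = v x := by rw [h1, one_mul]

lemma myv_nonneg (hmul : ∀ x y, v (x * y) = v x * v y)
    (hna : ∀ x y, v (x + y) ≤ max (v x) (v y))
    (hext : ∀ x : ℚ_[p], v (algebraMap ℚ_[p] K x) = ‖x‖) (x : K) : 0 ≤ v x := by
  have h := hna x (-x)
  rw [add_neg_cancel, myv_zero hext, myv_neg hmul hext, max_self] at h
  exact h

lemma myv_pos (hmul : ∀ x y, v (x * y) = v x * v y)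
    (hna : ∀ x y, v (x + y) ≤ max (v x) (v y))
    (hext : ∀ x : ℚ_[p], v (algebraMap ℚ_[p] K x) = ‖x‖) {x : K} (hx : x ≠ 0) : 0 < v x := by
  rcases (myv_nonneg hmul hna hext x).lt_or_eq with h | h
  · exact h
  · exfalso
    have : v x * v x⁻¹ = 1 := by rw [← hmul, mul_inv_cancel₀ hx, myv_one hext]
    rw [← h, zero_mul] at this
    exact zero_ne_one this

lemma myv_inv (hmul : ∀ x y, v (x * y) = v x * v y)
    (hna : ∀ x y, v (x + y) ≤ max (v x) (v y))
    (hext : ∀ x : ℚ_[p], v (algebraMap ℚ_[p] K x) = ‖x‖) {x : K} (hx : x ≠ 0) :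
    v x⁻¹ = (v x)⁻¹ := by
  have : v x * v x⁻¹ = 1 := by rw [← hmul, mul_inv_cancel₀ hx, myv_one hext]
  field_simp [(myv_pos hmul hna hext hx).ne'] at this ⊢
  linarith

lemma myv_pow (hmul : ∀ x y, v (x * y) = v x * v y)
    (hext : ∀ x : ℚ_[p], v (algebraMap ℚ_[p] K x) = ‖x‖) (x : K) (n : ℕ) :
    v (x ^ n) = v x ^ n := by
  induction n with
  | zero => simpa using myv_one hext
  | succ n ih => rw [pow_succ, pow_succ, hmul, ih]

lemma myv_nat (hext : ∀ x : ℚ_[p], v (algebraMap ℚ_[p] K x) = ‖x‖) (n : ℕ) :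
    v (n : K) = ‖(n : ℚ_[p])‖ := by
  rw [← hext]
  norm_cast

lemma myv_rootOfUnity (hmul : ∀ x y, v (x * y) = v x * v y)
    (hna : ∀ x y, v (x + y) ≤ max (v x) (v y))
    (hext : ∀ x : ℚ_[p], v (algebraMap ℚ_[p] K x) = ‖x‖) {ε : K}
    (hε : IsRootOfUnity ε) : v ε = 1 := by
  obtain ⟨m, hm, h⟩ := hε
  have hne : ε ≠ 0 := by
    intro h0
    rw [h0, zero_pow hm.ne'] at h
    exact zero_ne_one h
  have hpow : v ε ^ m = 1 := by rw [← myv_pow hmul hext, h, myv_one hext]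
  have hnn : 0 ≤ v ε := myv_nonneg hmul hna hext ε
  rcases lt_trichotomy (v ε) 1 with h1 | h1 | h1
  · exfalso
    have := pow_lt_one₀ hnn h1 hm.ne'
    rw [hpow] at this; exact lt_irrefl _ this
  · exact h1
  · exfalso
    have := one_lt_pow₀ h1 hm.ne'
    rw [hpow] at this; exact lt_irrefl _ this

lemma myv_add_eq (hmul : ∀ x y, v (x * y) = v x * v y)
    (hna : ∀ x y, v (x + y) ≤ max (v x) (v y))
    (hext : ∀ x : ℚ_[p], v (algebraMap ℚ_[p] K x) = ‖x‖) {x y : K}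
    (h : v y < v x) : v (x + y) = v x := by
  refine le_antisymm ((hna x y).trans (max_le le_rfl h.le)) ?_
  by_contra hlt
  push_neg at hlt
  have h3 := hna (x + y) (-y)
  rw [myv_neg hmul hext] at h3
  have h4 : x + y + -y = x := by ring
  rw [h4] at h3
  rcases max_cases (v (x+y)) (v y) with ⟨he, _⟩ | ⟨he, _⟩ <;> rw [he] at h3 <;> linarith

lemma myv_sum_le (hna : ∀ x y, v (x + y) ≤ max (v x) (v y))
    (hext : ∀ x : ℚ_[p], v (algebraMap ℚ_[p] K x) = ‖x‖)
    {ι : Type*} (s : Finset ι) (f : ι → K) {B : ℝ} (hB : 0 ≤ B)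
    (h : ∀ i ∈ s, v (f i) ≤ B) : v (∑ i ∈ s, f i) ≤ B := by
  classical
  induction s using Finset.induction_on with
  | empty => simpa [myv_zero hext] using hB
  | @insert a s hnotmem ih =>
    rw [Finset.sum_insert hnotmem]
    refine (hna _ _).trans (max_le (h a (Finset.mem_insert_self a s)) ?_)
    exact ih fun i hi => h i (Finset.mem_insert_of_mem hi)

/-- Roots of unity of order coprime to `p` that are close to `1` equal `1`. -/
lemma root_sep (hmul : ∀ x y, v (x * y) = v x * v y)
    (hna : ∀ x y, v (x + y) ≤ max (v x) (v y))
    (hext : ∀ x : ℚ_[p], v (algebraMap ℚ_[p] K x) = ‖x‖)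
    {N : ℕ} (hN : 0 < N) (hpN : ¬ p ∣ N) {ζ : K} (hζ : ζ ^ N = 1)
    (hlt : v (ζ - 1) < 1) : ζ = 1 := by
  by_contra hne
  set t : K := ζ - 1 with ht
  have htne : t ≠ 0 := sub_ne_zero.mpr hne
  have htpos : 0 < v t := myv_pos hmul hna hext htne
  obtain ⟨M, rfl⟩ : ∃ M, N = M + 1 := ⟨N - 1, (Nat.succ_pred_eq_of_pos hN).symm⟩
  have hexp : (t + 1) ^ (M + 1) = ∑ k ∈ Finset.range (M + 2), t ^ k * ((M+1).choose k : K) := by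
    rw [add_pow]
    simp
  have hζt : ζ = t + 1 := by rw [ht]; ring
  rw [← hζt, hζ] at hexp
  rw [Finset.sum_range_succ' _ (M+1)] at hexp
  simp only [pow_zero, Nat.choose_zero_right, Nat.cast_one, one_mul] at hexp
  have hsum0 : ∑ k ∈ Finset.range (M + 1), t ^ (k+1) * ((M+1).choose (k+1) : K) = 0 := by
    linear_combination -hexp
  rw [Finset.sum_range_succ' _ M] at hsum0
  simp only [pow_one, zero_add, Nat.choose_one_right] at hsum0
  have hkey : (↑(M+1) : K) * t = -∑ k ∈ Finset.range M, t ^ (k+1+1) * ((M+1).choose (k+1+1) : K) := by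
    linear_combination hsum0
  have hvN : v ((↑(M+1) : K)) = 1 := by
    rw [myv_nat hext]
    have h1 : ¬ ((p:ℤ) ∣ ((M+1 : ℕ) : ℤ)) := by exact_mod_cast hpN
    have h2 : ¬ ‖(((M+1:ℕ):ℤ):ℚ_[p])‖ < 1 := by
      have := (PadicInt.norm_int_lt_one_iff_dvd (p:=p) ((M+1 : ℕ):ℤ)).not.mpr h1
      rwa [PadicInt.norm_def, PadicInt.coe_intCast] at this
    have h3 : ‖(((M+1:ℕ):ℤ):ℚ_[p])‖ ≤ 1 := Padic.norm_int_le_one _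
    push_cast at h2 h3 ⊢
    rcases lt_or_eq_of_le h3 with h4 | h4
    · exact absurd h4 h2
    · exact h4
  have hbound : v (∑ k ∈ Finset.range M, t ^ (k+1+1) * ((M+1).choose (k+1+1) : K)) ≤ v t * v t := by
    refine myv_sum_le hna hext _ _ (by positivity) ?_
    intro k _
    rw [hmul, myv_pow hmul hext]
    have hc : v (((M+1).choose (k+1+1) : K)) ≤ 1 := by
      rw [myv_nat hext]
      exact_mod_cast Padic.norm_int_le_one (((M+1).choose (k+1+1) : ℤ))
    have hp2 : v t ^ (k+1+1) ≤ v t ^ 2 :=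
      pow_le_pow_of_le_one htpos.le hlt.le (by omega)
    calc v t ^ (k+1+1) * v (((M+1).choose (k+1+1) : K))
        ≤ v t ^ 2 * 1 := by
          apply mul_le_mul hp2 hc (myv_nonneg hmul hna hext _) (by positivity)
      _ = v t * v t := by ring
  have hveq : v ((↑(M+1) : K) * t) = v t := by rw [hmul, hvN, one_mul]
  rw [hkey] at hveq
  have : v (-∑ k ∈ Finset.range M, t ^ (k+1+1) * ((M+1).choose (k+1+1) : K)) ≤ v t * v t := by
    rwa [myv_neg hmul hext]
  rw [hveq] at this
  nlinarith

open Classical in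
theorem padic_valuation_of_linear_factor_at_roots_of_unity
    (p : ℕ) [Fact p.Prime] (d : ℕ) (hd : 0 < d)
    (v : AlgebraicClosure ℚ_[p] → ℝ)
    (hmul : ∀ x y, v (x * y) = v x * v y)
    (hna : ∀ x y, v (x + y) ≤ max (v x) (v y))
    (hext : ∀ x : ℚ_[p], v (algebraMap ℚ_[p] (AlgebraicClosure ℚ_[p]) x) = ‖x‖)
    (lam : AlgebraicClosure ℚ_[p]) :
    (∀ ε : AlgebraicClosure ℚ_[p], IsRootOfUnity ε →
        1 - lam * ε * ((p : AlgebraicClosure ℚ_[p]) ^ d)⁻¹ ≠ 0 →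
        (if lam = 0 then 0 else min 0 (vq p d v lam - 1)) ≤
          vq p d v (1 - lam * ε * ((p : AlgebraicClosure ℚ_[p]) ^ d)⁻¹)) ∧
    {ε : AlgebraicClosure ℚ_[p] | IsPrimeToRootOfUnity p ε ∧
        ¬ (1 - lam * ε * ((p : AlgebraicClosure ℚ_[p]) ^ d)⁻¹ ≠ 0 ∧
          vq p d v (1 - lam * ε * ((p : AlgebraicClosure ℚ_[p]) ^ d)⁻¹) =
            (if lam = 0 then 0 else min 0 (vq p d v lam - 1)))}.Finite := by
  have hppos : (1:ℝ) < (p:ℝ) := by exact_mod_cast (Fact.out : p.Prime).one_lt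
  set L : ℝ := Real.log ((p:ℝ)^d) with hLdef
  have hL : 0 < L := by
    rw [hLdef, Real.log_pow]
    exact mul_pos (by exact_mod_cast hd) (Real.log_pos hppos)
  have hqK : ((p : AlgebraicClosure ℚ_[p]) ^ d) ≠ 0 := by
    apply pow_ne_zero
    exact_mod_cast (Nat.cast_ne_zero (R := AlgebraicClosure ℚ_[p])).mpr (Fact.out : p.Prime).ne_zero
  have hvp : v ((p : AlgebraicClosure ℚ_[p])) = ((p:ℝ))⁻¹ := by
    rw [myv_nat hext, Padic.norm_p]
  have hvqinv : v (((p : AlgebraicClosure ℚ_[p]) ^ d)⁻¹) = (p:ℝ)^d := by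
    rw [myv_inv hmul hna hext hqK, myv_pow hmul hext, hvp, ← inv_pow, inv_inv]
  -- value of the linear factor argument
  have hvc : ∀ ε : AlgebraicClosure ℚ_[p], IsRootOfUnity ε →
      v (lam * ε * ((p : AlgebraicClosure ℚ_[p]) ^ d)⁻¹) = v lam * (p:ℝ)^d := by
    intro ε hε
    rw [hmul, hmul, myv_rootOfUnity hmul hna hext hε, hvqinv, mul_one]
  have hvq_of_one : ∀ x : AlgebraicClosure ℚ_[p], v x = 1 → vq p d v x = 0 := by
    intro x hx
    simp [vq, hx]
  have hvq_eq : ∀ x : AlgebraicClosure ℚ_[p], vq p d v x = -Real.log (v x) / L := by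
    intro x; rw [vq, hLdef]
  constructor
  · intro ε hε hne
    by_cases hlam : lam = 0
    · rw [if_pos hlam]
      have h1 : (1 : AlgebraicClosure ℚ_[p]) - lam * ε * ((p : AlgebraicClosure ℚ_[p]) ^ d)⁻¹ = 1 := by
        rw [hlam]; ring
      rw [h1, hvq_of_one 1 (myv_one hext)]
    · rw [if_neg hlam]
      have hvlam : 0 < v lam := myv_pos hmul hna hext hlam
      set r : ℝ := v lam * (p:ℝ)^d with hrdef
      have hrpos : 0 < r := by positivity
      have hvql : vq p d v lam - 1 = -Real.log r / L := by
        rw [hvq_eq, hrdef, Real.log_mul hvlam.ne' (by positivity), ← hLdef]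
        field_simp
        ring
      have hw : 0 < v (1 - lam * ε * ((p : AlgebraicClosure ℚ_[p]) ^ d)⁻¹) :=
        myv_pos hmul hna hext hne
      have hwle : v (1 - lam * ε * ((p : AlgebraicClosure ℚ_[p]) ^ d)⁻¹) ≤ max 1 r := by
        have h2 := hna 1 (-(lam * ε * ((p : AlgebraicClosure ℚ_[p]) ^ d)⁻¹))
        rw [myv_neg hmul hext, hvc ε hε, myv_one hext] at h2
        rw [sub_eq_add_neg]
        exact h2
      rw [hvql, hvq_eq]
      rcases le_total r 1 with h1 | h1
      · have hle1 : v (1 - lam * ε * ((p : AlgebraicClosure ℚ_[p]) ^ d)⁻¹) ≤ 1 :=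
          hwle.trans (max_le le_rfl h1)
        have hlog : Real.log (v (1 - lam * ε * ((p : AlgebraicClosure ℚ_[p]) ^ d)⁻¹)) ≤ 0 :=
          Real.log_nonpos hw.le hle1
        have h3 : 0 ≤ -Real.log (v (1 - lam * ε * ((p : AlgebraicClosure ℚ_[p]) ^ d)⁻¹)) / L :=
          div_nonneg (by linarith) hL.le
        exact (min_le_left _ _).trans h3
      · have hler : v (1 - lam * ε * ((p : AlgebraicClosure ℚ_[p]) ^ d)⁻¹) ≤ r :=
          hwle.trans (max_le h1 le_rfl)
        have hlog := Real.log_le_log hw hler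
        refine (min_le_right _ _).trans ?_
        exact (div_le_div_iff_of_pos_right hL).mpr (by linarith)
  · by_cases hlam : lam = 0
    · apply Set.Finite.subset Set.finite_empty
      intro ε hε
      exfalso
      simp only [Set.mem_setOf_eq] at hε
      obtain ⟨hru, hfail⟩ := hε
      apply hfail
      have h1 : (1 : AlgebraicClosure ℚ_[p]) - lam * ε * ((p : AlgebraicClosure ℚ_[p]) ^ d)⁻¹ = 1 := by
        rw [hlam]; ring
      rw [h1, if_pos hlam, hvq_of_one 1 (myv_one hext)]
      exact ⟨one_ne_zero, rfl⟩
    · -- lam ≠ 0 : the exceptional set is a subsingleton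
      have hvlam : 0 < v lam := myv_pos hmul hna hext hlam
      set r : ℝ := v lam * (p:ℝ)^d with hrdef
      have hrpos : 0 < r := by positivity
      have hvql : vq p d v lam - 1 = -Real.log r / L := by
        rw [hvq_eq, hrdef, Real.log_mul hvlam.ne' (by positivity), ← hLdef]
        field_simp
        ring
      -- Main claim: any exceptional ε forces r = 1 and v (1 - c ε) < 1
      have claim : ∀ ε : AlgebraicClosure ℚ_[p], IsRootOfUnity ε →
          ¬ (1 - lam * ε * ((p : AlgebraicClosure ℚ_[p]) ^ d)⁻¹ ≠ 0 ∧
            vq p d v (1 - lam * ε * ((p : AlgebraicClosure ℚ_[p]) ^ d)⁻¹) =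
              (if lam = 0 then 0 else min 0 (vq p d v lam - 1))) →
          r = 1 ∧ v (1 - lam * ε * ((p : AlgebraicClosure ℚ_[p]) ^ d)⁻¹) < 1 := by
        intro ε hε hfail
        rw [if_neg hlam] at hfail
        have hvcε : v (lam * ε * ((p : AlgebraicClosure ℚ_[p]) ^ d)⁻¹) = r := hvc ε hε
        have hr1 : r = 1 := by
          rcases lt_trichotomy r 1 with h1 | h1 | h1
          · exfalso
            apply hfail
            have hvw : v (1 - lam * ε * ((p : AlgebraicClosure ℚ_[p]) ^ d)⁻¹) = 1 := by
              rw [sub_eq_add_neg]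
              rw [myv_add_eq hmul hna hext (by
                rw [myv_neg hmul hext, hvcε, myv_one hext]; exact h1), myv_one hext]
            refine ⟨?_, ?_⟩
            · intro h0; rw [h0, myv_zero hext] at hvw; norm_num at hvw
            · rw [hvq_of_one _ hvw]
              have : 0 < -Real.log r / L :=
                div_pos (by have := Real.log_neg hrpos h1; linarith) hL
              rw [hvql]
              exact (min_eq_left this.le).symm
          · exact h1
          · exfalso
            apply hfail
            have hvw : v (1 - lam * ε * ((p : AlgebraicClosure ℚ_[p]) ^ d)⁻¹) = r := by
              have heq : (1 : AlgebraicClosure ℚ_[p]) - lam * ε * ((p : AlgebraicClosure ℚ_[p]) ^ d)⁻¹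
                  = -(lam * ε * ((p : AlgebraicClosure ℚ_[p]) ^ d)⁻¹) + 1 := by ring
              rw [heq, myv_add_eq hmul hna hext (by
                rw [myv_neg hmul hext, hvcε, myv_one hext]; exact h1),
                myv_neg hmul hext, hvcε]
            refine ⟨?_, ?_⟩
            · intro h0; rw [h0, myv_zero hext] at hvw; exact hrpos.ne' hvw.symm
            · rw [hvq_eq, hvw, ← hvql]
              have : vq p d v lam - 1 ≤ 0 := by
                rw [hvql]
                have := Real.log_pos h1
                have h2 : -Real.log r ≤ 0 := by linarith
                exact div_nonpos_of_nonpos_of_nonneg h2 hL.le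
              rw [hvql]
              exact (min_eq_right (by rw [← hvql]; exact this)).symm
        refine ⟨hr1, ?_⟩
        by_contra hge
        push_neg at hge
        have hle1 : v (1 - lam * ε * ((p : AlgebraicClosure ℚ_[p]) ^ d)⁻¹) ≤ 1 := by
          have h2 := hna 1 (-(lam * ε * ((p : AlgebraicClosure ℚ_[p]) ^ d)⁻¹))
          rw [myv_neg hmul hext, hvcε, myv_one hext, hr1, max_self] at h2
          rw [sub_eq_add_neg]
          exact h2
        have hvw : v (1 - lam * ε * ((p : AlgebraicClosure ℚ_[p]) ^ d)⁻¹) = 1 :=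
          le_antisymm hle1 hge
        apply hfail
        refine ⟨?_, ?_⟩
        · intro h0; rw [h0, myv_zero hext] at hvw; norm_num at hvw
        · rw [hvq_of_one _ hvw, hvql, hr1]
          simp
      apply Set.Subsingleton.finite
      intro ε₁ h₁ ε₂ h₂
      simp only [Set.mem_setOf_eq] at h₁ h₂
      obtain ⟨⟨m₁, hm₁, hpm₁, hε₁⟩, hfail₁⟩ := h₁
      obtain ⟨⟨m₂, hm₂, hpm₂, hε₂⟩, hfail₂⟩ := h₂
      have hru₁ : IsRootOfUnity ε₁ := ⟨m₁, hm₁, hε₁⟩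
      have hru₂ : IsRootOfUnity ε₂ := ⟨m₂, hm₂, hε₂⟩
      obtain ⟨hr1, hlt₁⟩ := claim ε₁ hru₁ hfail₁
      obtain ⟨_, hlt₂⟩ := claim ε₂ hru₂ hfail₂
      have hε₂ne : ε₂ ≠ 0 := by
        intro h0
        rw [h0, zero_pow hm₂.ne'] at hε₂
        exact zero_ne_one hε₂
      -- v (ε₁ - ε₂) < 1
      have hdiff : v (lam * ((p : AlgebraicClosure ℚ_[p]) ^ d)⁻¹ * (ε₁ - ε₂)) < 1 := by
        have heq : lam * ((p : AlgebraicClosure ℚ_[p]) ^ d)⁻¹ * (ε₁ - ε₂)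
            = (1 - lam * ε₂ * ((p : AlgebraicClosure ℚ_[p]) ^ d)⁻¹)
              + (-(1 - lam * ε₁ * ((p : AlgebraicClosure ℚ_[p]) ^ d)⁻¹)) := by ring
        rw [heq]
        refine (hna _ _).trans_lt ?_
        rw [myv_neg hmul hext]
        exact max_lt hlt₂ hlt₁
      have hvfac : v (lam * ((p : AlgebraicClosure ℚ_[p]) ^ d)⁻¹) = 1 := by
        rw [hmul, hvqinv, ← hrdef, hr1]
      have hsep : v (ε₁ - ε₂) < 1 := by
        rw [hmul, hvfac, one_mul] at hdiff
        exact hdiff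
      -- apply root separation
      by_cases heq : ε₁ = ε₂
      · exact heq
      · exfalso
        set ζ : AlgebraicClosure ℚ_[p] := ε₁ * ε₂⁻¹ with hζdef
        have hζpow : ζ ^ (m₁ * m₂) = 1 := by
          have e1 : ε₁ ^ (m₁ * m₂) = 1 := by rw [pow_mul, hε₁, one_pow]
          have e2 : ε₂ ^ (m₁ * m₂) = 1 := by rw [mul_comm, pow_mul, hε₂, one_pow]
          rw [hζdef, mul_pow, inv_pow, e1, e2, inv_one, mul_one]
        have hζv : v (ζ - 1) < 1 := by
          have h5 : ζ - 1 = ε₂⁻¹ * (ε₁ - ε₂) := by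
            rw [hζdef]
            field_simp
          rw [h5, hmul, myv_inv hmul hna hext hε₂ne,
            myv_rootOfUnity hmul hna hext hru₂, inv_one, one_mul]
          exact hsep
        have hζ1 : ζ = 1 := root_sep hmul hna hext (Nat.mul_pos hm₁ hm₂)
          (by
            intro hdvd
            rcases ((Fact.out : p.Prime).dvd_mul).mp hdvd with h | h
            · exact hpm₁ h
            · exact hpm₂ h) hζpow hζv
        apply heq
        rw [hζdef] at hζ1
        field_simp at hζ1
        exact hζ1
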